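/- For s ∈ ℂ with Re s > 3, the Barnes-type series ζ_B(s) := ∑_{ℓ=0}^∞ ((ℓ+1)(ℓ+2)/2) · (ℓ + 3/2)^{−s} converges absolutely. There exists a function h, holomorphic on {s ∈ ℂ : Re s > −1} ∖ {1, 3}, such that h(s) = ζ_B(s) for all s with Re s > 3, and: (i) lim_{s→3} (s − 3) h(s) = 1/2 (residue 1/2 at s = 3); (ii) lim_{s→1} (s − 1) h(s) = −1/8 (residue −1/8 at s = 1); (iii) h is holomorphic at s = 2, i.e. ζ_B has vanishing residue at s = 2; and (iv) h(0) = 0. -/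

import Mathlib

open Filter HurwitzZeta Complex Set Finset

noncomputable def B17A : UnitAddCircle := ((1/2 : ℝ) : UnitAddCircle)

lemma B17A_ne_zero : B17A ≠ 0 := by
  rw [B17A, Ne, AddCircle.coe_eq_zero_iff]
  rintro ⟨n, hn⟩
  simp only [zsmul_eq_mul, mul_one] at hn
  have h2 : ((2 * n : ℤ) : ℝ) = 1 := by push_cast; linarith
  have : (2 * n : ℤ) = 1 := by exact_mod_cast h2
  omega

lemma neg_B17A : -B17A = B17A := by
  have h : B17A + B17A = 0 := by
    rw [B17A, ← AddCircle.coe_add]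
    have : (1/2 + 1/2 : ℝ) = 1 := by norm_num
    rw [this]
    exact_mod_cast AddCircle.coe_period (p := (1:ℝ))
  exact neg_eq_of_add_eq_zero_left h

lemma B17_odd_zero (s : ℂ) : hurwitzZetaOdd B17A s = 0 := by
  have := hurwitzZetaOdd_neg B17A s
  rw [neg_B17A] at this
  linear_combination this / 2

lemma B17_hx (ℓ : ℕ) : ((ℓ:ℂ) + 3/2) ≠ 0 := by
  intro h
  have h2 := congrArg Complex.re h
  simp at h2
  have : (0:ℝ) ≤ (ℓ:ℝ) := Nat.cast_nonneg ℓ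
  linarith

lemma B17_hasSum_shift {s : ℂ} (hs : 1 < s.re) :
    HasSum (fun ℓ : ℕ => ((ℓ:ℂ) + 3/2) ^ (-s))
      (hurwitzZeta B17A s - (1/2:ℂ)^(-s)) := by
  have H := hasSum_hurwitzZeta_of_one_lt_re (a := (1/2:ℝ)) ⟨by norm_num, by norm_num⟩ hs
  have H' : HasSum (fun n : ℕ => ((n:ℂ) + 1/2) ^ (-s)) (hurwitzZeta B17A s) := by
    refine H.congr_fun fun n => ?_
    rw [cpow_neg, one_div]
    push_cast
    ring_nf
  have key : HasSum (fun n : ℕ => (((n+1:ℕ):ℂ) + 1/2) ^ (-s))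
      (hurwitzZeta B17A s - (1/2:ℂ)^(-s)) := by
    refine (hasSum_nat_add_iff (f := fun n : ℕ => ((n:ℂ) + 1/2) ^ (-s)) 1).mpr ?_
    convert H' using 1
    · rfl
    simp
  refine key.congr_fun fun n => ?_
  push_cast
  ring_nf

/-- The term identity splitting the Barnes summand. -/
lemma B17_term_eq {s : ℂ} (ℓ : ℕ) :
    ((ℓ : ℂ) + 1) * ((ℓ : ℂ) + 2) / 2 * ((ℓ : ℂ) + 3 / 2) ^ (-s)
      = ((ℓ:ℂ) + 3/2) ^ (-(s-2)) / 2 - ((ℓ:ℂ) + 3/2) ^ (-s) / 8 := by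
  rw [show -(s-2) = 2 + (-s) by ring, cpow_add _ _ (B17_hx ℓ), cpow_ofNat]
  ring

/-- The meromorphic continuation. -/
noncomputable def B17h (s : ℂ) : ℂ := hurwitzZeta B17A (s - 2) / 2 - hurwitzZeta B17A s / 8

lemma B17_hasSum {s : ℂ} (hs : 3 < s.re) :
    HasSum (fun ℓ : ℕ => ((ℓ : ℂ) + 1) * ((ℓ : ℂ) + 2) / 2 * ((ℓ : ℂ) + 3 / 2) ^ (-s))
      (B17h s) := by
  have h1 : 1 < (s - 2).re := by simp [Complex.sub_re]; linarith
  have h2 : 1 < s.re := by linarith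
  have H := ((B17_hasSum_shift h1).div_const 2).sub ((B17_hasSum_shift h2).div_const 8)
  have hval : (hurwitzZeta B17A (s-2) - (1/2:ℂ)^(-(s-2))) / 2
      - (hurwitzZeta B17A s - (1/2:ℂ)^(-s)) / 8 = B17h s := by
    rw [show -(s-2) = 2 + (-s) by ring, cpow_add _ _ (by norm_num : (1/2:ℂ) ≠ 0), cpow_ofNat,
      B17h]
    ring
  rw [hval] at H
  exact H.congr_fun fun ℓ => B17_term_eq (s := s) ℓ

lemma B17_norm_summable {w : ℂ} (hw : 1 < w.re) :
    Summable fun ℓ : ℕ => ‖((ℓ:ℂ) + 3/2) ^ (-w)‖ := by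
  have hbig : Summable fun n : ℕ => ((n:ℝ) + 1) ^ (-w.re) := by
    have h0 : Summable fun n : ℕ => ((n:ℝ)) ^ (-w.re) :=
      Real.summable_nat_rpow.mpr (by linarith)
    have := (summable_nat_add_iff 1).mpr h0
    refine this.congr fun n => ?_
    push_cast
    ring_nf
  refine hbig.of_nonneg_of_le (fun ℓ => norm_nonneg _) fun ℓ => ?_
  have hcast : ((ℓ:ℂ) + 3/2) = (((ℓ:ℝ) + 3/2 : ℝ) : ℂ) := by push_cast; ring
  have hpos : (0:ℝ) < (ℓ:ℝ) + 3/2 := by positivity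
  rw [hcast]
  rw [show ‖((((ℓ:ℝ) + 3/2 : ℝ)) : ℂ) ^ (-w)‖ = ‖(((((ℓ:ℝ) + 3/2 : ℝ)) : ℂ) ^ (-w))‖ from rfl,
    Complex.norm_cpow_eq_rpow_re_of_pos hpos]
  have h1 : (0:ℝ) < (ℓ:ℝ) + 1 := by positivity
  have hle : (ℓ:ℝ) + 1 ≤ (ℓ:ℝ) + 3/2 := by linarith
  have := Real.rpow_le_rpow_of_nonpos h1 hle (by simp [Complex.neg_re]; linarith : (-w).re ≤ 0)
  simpa using this

lemma B17_diffAt {s : ℂ} (h1 : s ≠ 1) (h3 : s ≠ 3) : DifferentiableAt ℂ B17h s := by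
  have d1 : DifferentiableAt ℂ (fun s : ℂ => hurwitzZeta B17A (s - 2)) s := by
    have := (differentiableAt_hurwitzZeta B17A (s := s - 2) (by
      intro h; apply h3; linear_combination h)).comp s
      ((differentiableAt_id.sub (differentiableAt_const (2:ℂ))))
    exact this
  exact (d1.div_const 2).sub ((differentiableAt_hurwitzZeta B17A h1).div_const 8)

theorem stmt_17 :
    (∀ s : ℂ, 3 < s.re →
      Summable fun ℓ : ℕ =>
        ‖((ℓ : ℂ) + 1) * ((ℓ : ℂ) + 2) / 2 * ((ℓ : ℂ) + 3 / 2) ^ (-s)‖) ∧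
    ∃ h : ℂ → ℂ,
      DifferentiableOn ℂ h ({s : ℂ | -1 < s.re} \ {(1 : ℂ), 3}) ∧
      (∀ s : ℂ, 3 < s.re →
        h s = ∑' ℓ : ℕ, ((ℓ : ℂ) + 1) * ((ℓ : ℂ) + 2) / 2 * ((ℓ : ℂ) + 3 / 2) ^ (-s)) ∧
      Tendsto (fun s : ℂ => (s - 3) * h s) (nhdsWithin 3 {(3 : ℂ)}ᶜ) (nhds (1 / 2)) ∧
      Tendsto (fun s : ℂ => (s - 1) * h s) (nhdsWithin 1 {(1 : ℂ)}ᶜ) (nhds (-(1 / 8))) ∧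
      DifferentiableAt ℂ h 2 ∧
      h 0 = 0 := by
  constructor
  · -- summability
    intro s hs
    have h1 : 1 < (s - 2).re := by simp [Complex.sub_re]; linarith
    have h2 : 1 < s.re := by linarith
    have hbound := ((B17_norm_summable h1).div_const 2).add ((B17_norm_summable h2).div_const 8)
    refine hbound.of_nonneg_of_le (fun ℓ => norm_nonneg _) fun ℓ => ?_
    rw [B17_term_eq ℓ]
    calc ‖((ℓ:ℂ) + 3/2) ^ (-(s-2)) / 2 - ((ℓ:ℂ) + 3/2) ^ (-s) / 8‖
        ≤ ‖((ℓ:ℂ) + 3/2) ^ (-(s-2)) / 2‖ + ‖((ℓ:ℂ) + 3/2) ^ (-s) / 8‖ := norm_sub_le _ _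
      _ = ‖((ℓ:ℂ) + 3/2) ^ (-(s-2))‖ / 2 + ‖((ℓ:ℂ) + 3/2) ^ (-s)‖ / 8 := by
          simp [norm_div]
  · refine ⟨B17h, ?_, ?_, ?_, ?_, ?_, ?_⟩
    · -- differentiability on the set
      intro s hs
      obtain ⟨-, hs2⟩ := hs
      simp only [Set.mem_insert_iff, Set.mem_singleton_iff, not_or] at hs2
      exact (B17_diffAt hs2.1 hs2.2).differentiableWithinAt
    · -- sum formula
      intro s hs
      exact (B17_hasSum hs).tsum_eq.symm
    · -- residue at 3
      have hmap : Tendsto (fun s : ℂ => s - 2) (nhdsWithin 3 {(3:ℂ)}ᶜ) (nhdsWithin 1 {(1:ℂ)}ᶜ) := by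
        refine tendsto_nhdsWithin_of_tendsto_nhds_of_eventually_within _ ?_ ?_
        · exact (((continuous_id.sub continuous_const).tendsto' 3 1 (by norm_num)).mono_left
            nhdsWithin_le_nhds)
        · filter_upwards [self_mem_nhdsWithin] with x hxx
          simp only [Set.mem_compl_iff, Set.mem_singleton_iff] at hxx ⊢
          intro hE; exact hxx (by linear_combination hE)
      have T1 := (hurwitzZeta_residue_one B17A).comp hmap
      have T2 : Tendsto (fun s : ℂ => (s - 3) * hurwitzZeta B17A s)
          (nhdsWithin 3 {(3:ℂ)}ᶜ) (nhds 0) := by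
        have hc : ContinuousAt (fun s : ℂ => (s - 3) * hurwitzZeta B17A s) 3 :=
          (continuousAt_id.sub continuousAt_const).mul
            (differentiableAt_hurwitzZeta B17A (by norm_num : (3:ℂ) ≠ 1)).continuousAt
        have := hc.tendsto.mono_left (nhdsWithin_le_nhds (s := {(3:ℂ)}ᶜ))
        simpa using this
      have := (T1.div_const 2).sub (T2.div_const 8)
      refine Tendsto.congr' (by
        filter_upwards with s
        show ((fun s : ℂ => (s - 1) * hurwitzZeta B17A s) ∘ fun s => s - 2) s / 2
          - (s - 3) * hurwitzZeta B17A s / 8 = (s - 3) * B17h s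
        simp only [Function.comp, B17h]
        ring) ?_
      convert this using 2
      norm_num
    · -- residue at 1
      have T1 : Tendsto (fun s : ℂ => (s - 1) * hurwitzZeta B17A (s - 2))
          (nhdsWithin 1 {(1:ℂ)}ᶜ) (nhds 0) := by
        have hd : DifferentiableAt ℂ (fun s : ℂ => hurwitzZeta B17A (s - 2)) 1 := by
          have := (differentiableAt_hurwitzZeta B17A (s := (1:ℂ) - 2) (by norm_num)).comp 1
            ((differentiableAt_id.sub (differentiableAt_const (2:ℂ))))
          exact this
        have hc : ContinuousAt (fun s : ℂ => (s - 1) * hurwitzZeta B17A (s - 2)) 1 :=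
          (continuousAt_id.sub continuousAt_const).mul hd.continuousAt
        have := hc.tendsto.mono_left (nhdsWithin_le_nhds (s := {(1:ℂ)}ᶜ))
        simpa using this
      have T2 := hurwitzZeta_residue_one B17A
      have := (T1.div_const 2).sub (T2.div_const 8)
      refine Tendsto.congr' (by
        filter_upwards with s
        show (s - 1) * hurwitzZeta B17A (s - 2) / 2 - (s - 1) * hurwitzZeta B17A s / 8
          = (s - 1) * B17h s
        simp only [B17h]; ring) ?_
      convert this using 2
      norm_num
    · exact B17_diffAt (by norm_num) (by norm_num)
    · -- value at 0
      have hZ0 : hurwitzZeta B17A 0 = 0 := by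
        rw [hurwitzZeta, hurwitzZetaEven_apply_zero, if_neg B17A_ne_zero, B17_odd_zero]
        ring
      have hZm2 : hurwitzZeta B17A (-2) = 0 := by
        have h := hurwitzZeta_neg_nat (k := 2) (x := (1/2:ℝ)) (by norm_num)
          ⟨by norm_num, by norm_num⟩
        have hB : ((Polynomial.bernoulli 3).map (algebraMap ℚ ℂ)).eval ((1/2:ℝ) : ℂ) = 0 := by
          rw [show (((1/2:ℝ)):ℂ) = (1/2:ℂ) by norm_num]
          simp [Polynomial.bernoulli, Finset.sum_range_succ, Polynomial.eval_map]
          rw [bernoulli_eq_bernoulli'_of_ne_one (by norm_num : (3:ℕ) ≠ 1), bernoulli'_three]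
          norm_num
        rw [show (-2:ℂ) = -((2:ℕ):ℂ) by norm_num, show B17A = ((1/2:ℝ) : UnitAddCircle) from rfl]
        rw [h, hB, mul_zero]
      rw [B17h]
      norm_num [hZ0, hZm2]
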